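/- Let q be a prime with q > N·u, let γ be a generator of the multiplicative group F_q^*, let n ≥ 1 and let a := u·ρ_r·N be a positive integer with ρ_r ≤ 1. Define the folded Reed–Solomon based encoder Enc : F_q^n × F_q^a → (F_q^u)^N as follows: on message s ∈ F_q^n and randomness a-tuple b ∈ F_q^a, let f(X) = Σ_{i=0}^{n−1} s_i X^i + Σ_{i=0}^{a−1} b_i X^{n+i}, and set the i-th codeword symbol (1 ≤ i ≤ N) to c_i = ( f(γ^{(i−1)u}), f(γ^{(i−1)u+1}), …, f(γ^{(i−1)u+u−1}) ) ∈ F_q^u. Then for every subset S ⊆ {1,…,N} with |S| ≤ ρ_r·N and all messages s, s' ∈ F_q^n, the distribution of the restricted codeword Enc(s, B)|_S equals the distribution of Enc(s', B)|_S, where B is uniform on F_q^a; i.e., the statistical distance between the two views is 0 (perfect secrecy against reading ratio ρ_r). -/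

import Mathlib

open Finset

noncomputable section

open scoped Classical

/-- Lagrange interpolation packaged as existence of coefficients. -/
lemma exists_interp_coeffs {F : Type*} [Field F] {ι : Type*} [Fintype ι]
    (a : ℕ) (ha : 0 < a) (hcard : Fintype.card ι ≤ a)
    (x : ι → F) (hx : Function.Injective x) (t : ι → F) :
    ∃ b₀ : Fin a → F, ∀ k, ∑ i' : Fin a, b₀ i' * (x k) ^ (i' : ℕ) = t k := by
  classical
  set p := Lagrange.interpolate Finset.univ x t with hp
  have hdeg : p.degree < (Fintype.card ι : ℕ) := by
    rw [hp]
    simpa using Lagrange.degree_interpolate_lt (s := Finset.univ) (r := t) hx.injOn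
  have hnat : p.natDegree < a := by
    rcases eq_or_ne p 0 with h0 | h0
    · simpa [h0] using ha
    · have : p.degree < (a : ℕ) := lt_of_lt_of_le hdeg (by exact_mod_cast hcard)
      exact (Polynomial.natDegree_lt_iff_degree_lt h0).2 this
  refine ⟨fun i' => p.coeff i', fun k => ?_⟩
  have heval := Polynomial.eval_eq_sum_range' hnat (x k)
  rw [Fin.sum_univ_eq_sum_range (fun i => p.coeff i * (x k) ^ i) a, ← heval]
  exact Lagrange.eval_interpolate_at_node t hx.injOn (Finset.mem_univ k)

/-- Perfect secrecy of the folded Reed–Solomon based encoder. -/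
theorem frs_perfect_secrecy
    (q : ℕ) [Fact q.Prime]
    (N u n a : ℕ) (hn : 1 ≤ n) (ha : 0 < a)
    (ρr : ℝ) (hρr : ρr ≤ 1) (haeq : (a : ℝ) = (u : ℝ) * ρr * N)
    (hq : N * u < q)
    (γ : (ZMod q)ˣ) (hγ : ∀ x : (ZMod q)ˣ, x ∈ Subgroup.zpowers γ)
    (Enc : (Fin n → ZMod q) → (Fin a → ZMod q) → Fin N → Fin u → ZMod q)
    (hEnc : ∀ s b i j, Enc s b i j =
        ∑ i' : Fin n, s i' * ((γ : ZMod q) ^ ((i : ℕ) * u + (j : ℕ))) ^ (i' : ℕ) +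
        ∑ i' : Fin a, b i' * ((γ : ZMod q) ^ ((i : ℕ) * u + (j : ℕ))) ^ (n + (i' : ℕ))) :
    ∀ S : Finset (Fin N), (S.card : ℝ) ≤ ρr * N →
    ∀ s s' : Fin n → ZMod q, ∀ v : {i // i ∈ S} → Fin u → ZMod q,
      (Finset.univ.filter (fun b : Fin a → ZMod q =>
          ∀ i : {i // i ∈ S}, (fun j => Enc s b i.val j) = v i)).card =
      (Finset.univ.filter (fun b : Fin a → ZMod q =>
          ∀ i : {i // i ∈ S}, (fun j => Enc s' b i.val j) = v i)).card := by
  intro S hS s s' v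
  -- the evaluation points
  set ι := {i // i ∈ S} × Fin u with hι
  have hu0 : ∀ (j : Fin u), 0 < u := fun j => j.pos
  -- order of γ
  have hord : orderOf γ = q - 1 := by
    rw [orderOf_eq_card_of_forall_mem_zpowers hγ, Nat.card_eq_fintype_card, ZMod.card_units q]
  have hNu : N * u ≤ orderOf γ := by
    rw [hord]; omega
  -- exponents
  set e : ι → ℕ := fun k => (k.1.val : ℕ) * u + (k.2 : ℕ) with he
  have helt : ∀ k : ι, e k < N * u := by
    rintro ⟨i, j⟩
    have h1 : (i.val : ℕ) < N := i.val.isLt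
    have h2 : (j : ℕ) < u := j.isLt
    calc (i.val : ℕ) * u + (j : ℕ) < (i.val : ℕ) * u + u := by omega
    _ = ((i.val : ℕ) + 1) * u := by ring
    _ ≤ N * u := Nat.mul_le_mul_right u (by omega)
  have heinj : Function.Injective e := by
    rintro ⟨i, j⟩ ⟨i', j'⟩ h
    have h2 : (j : ℕ) < u := j.isLt
    have h2' : (j' : ℕ) < u := j'.isLt
    simp only [he] at h
    have hj : (j : ℕ) = (j' : ℕ) := by
      have := congrArg (· % u) h
      simpa [Nat.mul_add_mod, Nat.add_mul_mod_self_left, Nat.mod_eq_of_lt h2,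
        Nat.mod_eq_of_lt h2', Nat.add_comm, Nat.add_mul_mod_self_right] using this
    have hi : (i.val : ℕ) = (i'.val : ℕ) := by
      have hu : 0 < u := j.pos
      have : (i.val : ℕ) * u = (i'.val : ℕ) * u := by omega
      exact Nat.eq_of_mul_eq_mul_right hu this
    ext
    · exact hi
    · exact hj
  set x : ι → ZMod q := fun k => (γ : ZMod q) ^ (e k) with hx
  have hxu : ∀ k : ι, x k = ((γ ^ (e k) : (ZMod q)ˣ) : ZMod q) := by
    intro k; simp [hx]
  have hxne : ∀ k : ι, x k ≠ 0 := by
    intro k; rw [hxu k]; exact Units.ne_zero _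
  have hxinj : Function.Injective x := by
    intro k k' h
    rw [hxu, hxu] at h
    have h2 : (γ ^ (e k) : (ZMod q)ˣ) = γ ^ (e k') := Units.ext h
    have := pow_injOn_Iio_orderOf (x := γ)
      (Set.mem_Iio.2 (lt_of_lt_of_le (helt k) hNu))
      (Set.mem_Iio.2 (lt_of_lt_of_le (helt k') hNu)) h2
    exact heinj this
  -- cardinality bound
  have hcard : Fintype.card ι ≤ a := by
    have hcard1 : Fintype.card ι = S.card * u := by
      simp [hι, Fintype.card_prod, Fintype.card_coe]
    have hreal : ((S.card * u : ℕ) : ℝ) ≤ (a : ℝ) := by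
      push_cast
      rw [haeq]
      have hu : (0 : ℝ) ≤ (u : ℝ) := Nat.cast_nonneg u
      calc (S.card : ℝ) * u = (u : ℝ) * S.card := by ring
      _ ≤ (u : ℝ) * (ρr * N) := by
          apply mul_le_mul_of_nonneg_left hS hu
      _ = (u : ℝ) * ρr * N := by ring
    rw [hcard1]
    exact_mod_cast hreal
  -- interpolate the difference polynomial divided by x^n
  obtain ⟨b₀, hb₀⟩ := exists_interp_coeffs a ha hcard x hxinj
    (fun k => (∑ i' : Fin n, (s i' - s' i') * (x k) ^ (i' : ℕ)) * ((x k) ^ n)⁻¹)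
  -- key identity
  have hkey : ∀ (b : Fin a → ZMod q) (k : ι),
      Enc s' (b + b₀) k.1.val k.2 = Enc s b k.1.val k.2 := by
    intro b k
    have hX : (γ : ZMod q) ^ ((k.1.val : ℕ) * u + (k.2 : ℕ)) = x k := rfl
    rw [hEnc, hEnc, hX]
    have hb0sum : ∑ i' : Fin a, b₀ i' * (x k) ^ (n + (i' : ℕ)) =
        ∑ i' : Fin n, (s i' - s' i') * (x k) ^ (i' : ℕ) := by
      have : ∑ i' : Fin a, b₀ i' * (x k) ^ (n + (i' : ℕ)) =
          (x k) ^ n * ∑ i' : Fin a, b₀ i' * (x k) ^ (i' : ℕ) := by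
        rw [Finset.mul_sum]
        apply Finset.sum_congr rfl
        intro i' _
        rw [pow_add]; ring
      rw [this, hb₀ k, mul_comm, mul_assoc,
        inv_mul_cancel₀ (pow_ne_zero n (hxne k)), mul_one]
    have hsplit : ∑ i' : Fin a, (b + b₀) i' * (x k) ^ (n + (i' : ℕ)) =
        ∑ i' : Fin a, b i' * (x k) ^ (n + (i' : ℕ)) +
        ∑ i' : Fin a, b₀ i' * (x k) ^ (n + (i' : ℕ)) := by
      rw [← Finset.sum_add_distrib]
      apply Finset.sum_congr rfl
      intro i' _
      simp [add_mul]
    rw [hsplit, hb0sum]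
    have hdiff : ∑ i' : Fin n, (s i' - s' i') * (x k) ^ (i' : ℕ) =
        ∑ i' : Fin n, s i' * (x k) ^ (i' : ℕ)
        - ∑ i' : Fin n, s' i' * (x k) ^ (i' : ℕ) := by
      rw [← Finset.sum_sub_distrib]
      apply Finset.sum_congr rfl
      intro i' _
      ring
    rw [hdiff]
    ring
  -- bijection b ↦ b + b₀
  apply Finset.card_bij' (fun b _ => b + b₀) (fun b _ => b - b₀)
  · intro b hb
    simp only [Finset.mem_filter, Finset.mem_univ, true_and] at hb ⊢
    intro i
    funext j
    rw [hkey b ⟨i, j⟩]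
    exact congrFun (hb i) j
  · intro b hb
    simp only [Finset.mem_filter, Finset.mem_univ, true_and] at hb ⊢
    intro i
    funext j
    have := hkey (b - b₀) ⟨i, j⟩
    simp only [sub_add_cancel] at this
    rw [← this]
    exact congrFun (hb i) j
  · intro b _; simp
  · intro b _; simp
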